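/- arXiv:1903.06205 — 3 statements merged into one kernel-verified Lean document; each statement's English description precedes it below -/
import Mathlib

section
/- For 0 < β < 1, the n×n matrix K̄(β) with entries K̄(β)_{kq} = β^{max(k,q)} (indices k,q from 1 to n) is symmetric positive definite. -/
open Finset Matrix

/-- Indicator reformulation of a sum over `Ico a n`. -/
lemma tc_indic (a n : ℕ) (g : ℕ → ℝ) (ha : a ≤ n) :
    ∑ j ∈ Finset.Ico a n, g j = ∑ j ∈ Finset.range n, if a ≤ j then g j else 0 := by
  rw [Finset.range_eq_Ico, ← Finset.sum_Ico_consecutive _ (Nat.zero_le a) ha]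
  have h1 : ∀ j ∈ Finset.Ico 0 a, (if a ≤ j then g j else 0) = 0 := by
    intro j hj
    rw [Finset.mem_Ico] at hj
    rw [if_neg (by omega)]
  have h2 : ∀ j ∈ Finset.Ico a n, (if a ≤ j then g j else 0) = g j := by
    intro j hj
    rw [Finset.mem_Ico] at hj
    rw [if_pos hj.1]
  rw [Finset.sum_congr rfl h1, Finset.sum_congr rfl h2, Finset.sum_const_zero, zero_add]

/-- Telescoping identity for the coefficients of the TC kernel decomposition. -/
lemma tc_tele (β : ℝ) {m n : ℕ} (h : m < n) :
    ∑ j ∈ Finset.Ico m n, (β ^ (j + 1) - if j + 2 ≤ n then β ^ (j + 2) else 0)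
      = β ^ (m + 1) := by
  have key : ∀ j ∈ Finset.Ico m n,
      (β ^ (j + 1) - if j + 2 ≤ n then β ^ (j + 2) else 0)
        = (fun i => if i + 1 ≤ n then β ^ (i + 1) else 0) j
          - (fun i => if i + 1 ≤ n then β ^ (i + 1) else 0) (j + 1) := by
    intro j hj
    rw [Finset.mem_Ico] at hj
    have h1 : j + 1 ≤ n := by omega
    simp only [if_pos h1]
  rw [Finset.sum_congr rfl key, Finset.sum_Ico_eq_sub _ h.le,
    Finset.sum_range_sub' (fun i => if i + 1 ≤ n then β ^ (i + 1) else 0),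
    Finset.sum_range_sub' (fun i => if i + 1 ≤ n then β ^ (i + 1) else 0)]
  have hm : m + 1 ≤ n := h
  have hn : ¬ (n + 1 ≤ n) := by omega
  simp only [if_pos hm, if_neg hn]
  ring

/-- For `0 < β < 1`, the TC kernel matrix `K̄(β)` with entries `β^{max(k,q)}`
(indices `1,…,n`) is symmetric positive definite. -/
theorem stmt3 {n : ℕ} (β : ℝ) (hβ0 : 0 < β) (hβ1 : β < 1) :
    (Matrix.of fun k q : Fin n => β ^ (max (k.1 + 1) (q.1 + 1))).PosDef := by
  set c : ℕ → ℝ := fun j => β ^ (j + 1) - if j + 2 ≤ n then β ^ (j + 2) else 0 with hc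
  have hcpos : ∀ j, j < n → 0 < c j := by
    intro j hj
    simp only [hc]
    split_ifs with h
    · have : β ^ (j + 2) < β ^ (j + 1) := by
        apply pow_lt_pow_right_of_lt_one₀ hβ0 hβ1
        omega
      linarith
    · have := pow_pos hβ0 (j + 1); linarith
  have hsum : ∀ m, m < n → ∑ j ∈ Finset.Ico m n, c j = β ^ (m + 1) := by
    intro m hm
    simp only [hc]
    exact tc_tele β hm
  clear_value c
  refine Matrix.posDef_iff_dotProduct_mulVec.mpr ⟨?_, ?_⟩
  · -- Hermitian
    show _ = _
    ext k q
    simp only [Matrix.conjTranspose_apply, Matrix.of_apply, star_trivial]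
    rw [max_comm]
  · intro x hx
    set S : ℕ → ℝ := fun j => ∑ k : Fin n, if k.1 ≤ j then x k else 0 with hS
    have hmax : ∀ k q : Fin n, max (k.1 + 1) (q.1 + 1) = max k.1 q.1 + 1 := by
      intro k q; omega
    have hform : star x ⬝ᵥ ((Matrix.of fun k q : Fin n => β ^ (max (k.1 + 1) (q.1 + 1))) *ᵥ x)
        = ∑ j ∈ Finset.range n, c j * S j ^ 2 := by
      calc star x ⬝ᵥ ((Matrix.of fun k q : Fin n => β ^ (max (k.1 + 1) (q.1 + 1))) *ᵥ x)
          = ∑ k : Fin n, ∑ q : Fin n, x k * (β ^ (max k.1 q.1 + 1) * x q) := by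
            simp only [dotProduct, Matrix.mulVec, Matrix.of_apply, star_trivial,
              Pi.star_apply, hmax, Finset.mul_sum]
        _ = ∑ k : Fin n, ∑ q : Fin n, ∑ j ∈ Finset.range n,
              (if max k.1 q.1 ≤ j then x k * (c j * x q) else 0) := by
            refine Finset.sum_congr rfl fun k _ => Finset.sum_congr rfl fun q _ => ?_
            have hlt : max k.1 q.1 < n := by
              have := k.2; have := q.2; omega
            rw [← hsum _ hlt, Finset.sum_mul, Finset.mul_sum, tc_indic _ _ _ hlt.le]
        _ = ∑ k : Fin n, ∑ j ∈ Finset.range n, ∑ q : Fin n,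
              (if max k.1 q.1 ≤ j then x k * (c j * x q) else 0) :=
            Finset.sum_congr rfl fun k _ => Finset.sum_comm
        _ = ∑ j ∈ Finset.range n, ∑ k : Fin n, ∑ q : Fin n,
              (if max k.1 q.1 ≤ j then x k * (c j * x q) else 0) :=
            Finset.sum_comm
        _ = ∑ j ∈ Finset.range n, c j * S j ^ 2 := by
            refine Finset.sum_congr rfl fun j _ => ?_
            have key : ∀ k q : Fin n,
                (if max k.1 q.1 ≤ j then x k * (c j * x q) else 0)
                  = (if k.1 ≤ j then x k else 0) * (c j * (if q.1 ≤ j then x q else 0)) := by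
              intro k q
              simp only [max_le_iff]
              split_ifs
              all_goals try (exfalso; omega)
              all_goals ring
            simp only [key, hS]
            simp only [← Finset.mul_sum]
            rw [← Finset.sum_mul]
            ring
    rw [hform]
    -- positivity
    have hne : (Finset.univ.filter fun k : Fin n => x k ≠ 0).Nonempty := by
      rw [Finset.filter_nonempty_iff]
      obtain ⟨k, hk⟩ := Function.ne_iff.mp hx
      exact ⟨k, Finset.mem_univ k, hk⟩
    set k0 := (Finset.univ.filter fun k : Fin n => x k ≠ 0).min' hne with hk0
    have hk0mem := Finset.min'_mem _ hne
    rw [← hk0, Finset.mem_filter] at hk0mem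
    have hSk0 : S k0.1 = x k0 := by
      simp only [hS]
      rw [Finset.sum_eq_single k0]
      · rw [if_pos (le_refl _)]
      · intro k _ hkne
        by_cases hxk : x k = 0
        · simp [hxk]
        · have hkmem : k ∈ Finset.univ.filter fun k : Fin n => x k ≠ 0 := by
            rw [Finset.mem_filter]; exact ⟨Finset.mem_univ k, hxk⟩
          have hle := Finset.min'_le _ _ hkmem
          rw [← hk0] at hle
          have hlt : k0 < k := lt_of_le_of_ne hle (fun h => hkne h.symm)
          rw [if_neg (by exact_mod_cast Nat.not_le.mpr hlt)]
      · intro h; exact absurd (Finset.mem_univ k0) h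
    apply Finset.sum_pos'
    · intro j hj
      rw [Finset.mem_range] at hj
      exact mul_nonneg (hcpos j hj).le (sq_nonneg _)
    · refine ⟨k0.1, Finset.mem_range.mpr k0.2, ?_⟩
      rw [hSk0]
      have hxk0 : x k0 ≠ 0 := hk0mem.2
      have h2 : (0:ℝ) < x k0 ^ 2 := by positivity
      exact mul_pos (hcpos _ k0.2) h2
end

section
/- For 0 < β < 1 and n ≥ 2, the inverse of the n×n matrix K̄(β) with entries β^{max(k,q)} is tridiagonal; explicitly, (K̄(β)⁻¹)_{kq} = 0 whenever |k − q| ≥ 2. -/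
open Matrix

/-- Key lemma: the determinant of the TC kernel matrix with row `q` replaced by the
standard basis row `e_k` vanishes when `k + 2 ≤ q`, because `e_k` lies in the span of
rows `k-1, k, k+1` (or rows `0, 1` when `k = 0`) of the matrix, none of which is row `q`. -/
lemma tc_update_det_zero {n : ℕ} (β : ℝ) (hβ0 : 0 < β) (hβ1 : β < 1)
    (k q : Fin n) (hkq : k.1 + 2 ≤ q.1) :
    ((Matrix.of fun k q : Fin n => β ^ (max (k.1 + 1) (q.1 + 1))).updateRow q
      (Pi.single k 1)).det = 0 := by
  set M : Matrix (Fin n) (Fin n) ℝ :=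
    Matrix.of fun k q : Fin n => β ^ (max (k.1 + 1) (q.1 + 1)) with hM
  set B := M.updateRow q (Pi.single k 1) with hB
  have hqn : q.1 < n := q.2
  rw [← Matrix.exists_vecMul_eq_zero_iff]
  rcases Nat.eq_zero_or_pos k.1 with hk0 | hkpos
  · -- k = 0 : rows 0 and 1 of M differ by (β - β²) e₀
    set i₂ : Fin n := ⟨1, by omega⟩ with hi₂
    have hv₂ : i₂.1 = 1 := rfl
    have h1 : k ≠ q := Fin.ne_of_val_ne (by omega)
    have h2 : i₂ ≠ q := Fin.ne_of_val_ne (by omega)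
    refine ⟨Pi.single k 1 + Pi.single i₂ (-1) + Pi.single q (-(β - β ^ 2)), ?_, ?_⟩
    · intro h
      have hq1 := congrFun h q
      simp [Pi.single_apply, h1, h2, Ne.symm h1, Ne.symm h2] at hq1
      nlinarith
    · funext j
      have hBk : B k = M k := Matrix.updateRow_ne h1
      have hB1 : B i₂ = M i₂ := Matrix.updateRow_ne h2
      have hBq : B q = Pi.single k 1 := Matrix.updateRow_self
      simp only [Matrix.add_vecMul, Matrix.single_vecMul, Matrix.row_def, Pi.add_apply, Pi.smul_apply, smul_eq_mul, hBk, hB1, hBq]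
      have rk : M k j = β ^ (max 1 (j.1 + 1)) := by
        show β ^ (max (k.1 + 1) (j.1 + 1)) = _
        congr 1
        omega
      have r2 : M i₂ j = β ^ (max 2 (j.1 + 1)) := rfl
      rcases Nat.eq_zero_or_pos j.1 with hj0 | hjpos
      · have hjk : j = k := Fin.ext (by omega)
        have e1 : max 1 (j.1 + 1) = 1 := by omega
        have e2 : max 2 (j.1 + 1) = 2 := by omega
        rw [rk, r2, e1, e2, hjk, Pi.single_eq_same, Pi.zero_apply]
        ring
      · have hjk : j ≠ k := Fin.ne_of_val_ne (by omega)
        have e1 : max 1 (j.1 + 1) = j.1 + 1 := by omega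
        have e2 : max 2 (j.1 + 1) = j.1 + 1 := by omega
        rw [rk, r2, e1, e2, Pi.single_eq_of_ne hjk, Pi.zero_apply]
        ring
  · -- k ≥ 1 : rows k-1, k, k+1 combine to a multiple of e_k
    obtain ⟨m, hm⟩ : ∃ m, k.1 = m + 1 := ⟨k.1 - 1, by omega⟩
    have hmn1 : m < n := by omega
    have hmn3 : m + 2 < n := by omega
    set i₁ : Fin n := ⟨m, hmn1⟩ with hi₁
    set i₃ : Fin n := ⟨m + 2, hmn3⟩ with hi₃
    have hv₁ : i₁.1 = m := rfl
    have hv₃ : i₃.1 = m + 2 := rfl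
    have h1 : i₁ ≠ q := Fin.ne_of_val_ne (by omega)
    have h2 : k ≠ q := Fin.ne_of_val_ne (by omega)
    have h3 : i₃ ≠ q := Fin.ne_of_val_ne (by omega)
    have hc₄ne : (β ^ (m + 1) - β ^ (m + 2)) * (β ^ (m + 2) - β ^ (m + 3)) ≠ 0 := by
      have ha : β ^ (m + 2) < β ^ (m + 1) :=
        pow_lt_pow_right_of_lt_one₀ hβ0 hβ1 (by omega)
      have hb : β ^ (m + 3) < β ^ (m + 2) :=
        pow_lt_pow_right_of_lt_one₀ hβ0 hβ1 (by omega)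
      exact ne_of_gt (mul_pos (sub_pos.mpr ha) (sub_pos.mpr hb))
    refine ⟨Pi.single i₁ (β ^ (m + 2) - β ^ (m + 3)) +
        Pi.single k (-(β ^ (m + 1) - β ^ (m + 3))) +
        Pi.single i₃ (β ^ (m + 1) - β ^ (m + 2)) +
        Pi.single q ((β ^ (m + 1) - β ^ (m + 2)) * (β ^ (m + 2) - β ^ (m + 3))), ?_, ?_⟩
    · intro h
      have hq1 := congrFun h q
      have ha : β ^ (m + 2) < β ^ (m + 1) :=
        pow_lt_pow_right_of_lt_one₀ hβ0 hβ1 (by omega)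
      have hb : β ^ (m + 3) < β ^ (m + 2) :=
        pow_lt_pow_right_of_lt_one₀ hβ0 hβ1 (by omega)
      simp [Pi.single_apply, h1, h2, h3, Ne.symm h1, Ne.symm h2, Ne.symm h3] at hq1
      rcases hq1 with h | h <;> nlinarith
    · funext j
      have hB1 : B i₁ = M i₁ := Matrix.updateRow_ne h1
      have hB2 : B k = M k := Matrix.updateRow_ne h2
      have hB3 : B i₃ = M i₃ := Matrix.updateRow_ne h3
      have hBq : B q = Pi.single k 1 := Matrix.updateRow_self
      simp only [Matrix.add_vecMul, Matrix.single_vecMul, Matrix.row_def, Pi.add_apply, Pi.smul_apply, smul_eq_mul, hB1, hB2, hB3, hBq]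
      have r1 : M i₁ j = β ^ (max (m + 1) (j.1 + 1)) := rfl
      have r2 : M k j = β ^ (max (m + 2) (j.1 + 1)) := by
        show β ^ (max (k.1 + 1) (j.1 + 1)) = _
        congr 1
        omega
      have r3 : M i₃ j = β ^ (max (m + 3) (j.1 + 1)) := rfl
      rcases lt_trichotomy j.1 (m + 1) with hj | hj | hj
      · have hjk : j ≠ k := Fin.ne_of_val_ne (by omega)
        have e1 : max (m + 1) (j.1 + 1) = m + 1 := by omega
        have e2 : max (m + 2) (j.1 + 1) = m + 2 := by omega
        have e3 : max (m + 3) (j.1 + 1) = m + 3 := by omega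
        rw [r1, r2, r3, e1, e2, e3, Pi.single_eq_of_ne hjk, Pi.zero_apply]
        ring
      · have hjk : j = k := Fin.ext (by omega)
        have e1 : max (m + 1) (j.1 + 1) = m + 2 := by omega
        have e2 : max (m + 2) (j.1 + 1) = m + 2 := by omega
        have e3 : max (m + 3) (j.1 + 1) = m + 3 := by omega
        rw [r1, r2, r3, e1, e2, e3, hjk, Pi.single_eq_same, Pi.zero_apply]
        ring
      · have hjk : j ≠ k := Fin.ne_of_val_ne (by omega)
        have e1 : max (m + 1) (j.1 + 1) = j.1 + 1 := by omega
        have e2 : max (m + 2) (j.1 + 1) = j.1 + 1 := by omega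
        have e3 : max (m + 3) (j.1 + 1) = j.1 + 1 := by omega
        rw [r1, r2, r3, e1, e2, e3, Pi.single_eq_of_ne hjk, Pi.zero_apply]
        ring

lemma tc_inv_zero_of_lt {n : ℕ} (β : ℝ) (hβ0 : 0 < β) (hβ1 : β < 1)
    (k q : Fin n) (hkq : k.1 + 2 ≤ q.1) :
    (Matrix.of fun k q : Fin n => β ^ (max (k.1 + 1) (q.1 + 1)))⁻¹ k q = 0 := by
  rw [Matrix.inv_def, Matrix.smul_apply, Matrix.adjugate_apply,
    tc_update_det_zero β hβ0 hβ1 k q hkq, smul_zero]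

/-- For `0 < β < 1` and `n ≥ 2`, the inverse of the TC kernel matrix
`K̄(β)` with entries `β^{max(k,q)}` is tridiagonal: `(K̄(β)⁻¹)_{kq} = 0` if `|k-q| ≥ 2`. -/
theorem stmt15 {n : ℕ} (hn : 2 ≤ n) (β : ℝ) (hβ0 : 0 < β) (hβ1 : β < 1) :
    ∀ k q : Fin n, 2 ≤ |(k.1 : ℤ) - (q.1 : ℤ)| →
      (Matrix.of fun k q : Fin n => β ^ (max (k.1 + 1) (q.1 + 1)))⁻¹ k q = 0 := by
  intro k q habs
  have hcases : k.1 + 2 ≤ q.1 ∨ q.1 + 2 ≤ k.1 := by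
    rcases abs_cases ((k.1 : ℤ) - (q.1 : ℤ)) with ⟨h1, _⟩ | ⟨h1, _⟩ <;> omega
  rcases hcases with h | h
  · exact tc_inv_zero_of_lt β hβ0 hβ1 k q h
  · have hsymm : (Matrix.of fun k q : Fin n => β ^ (max (k.1 + 1) (q.1 + 1)))ᵀ =
        (Matrix.of fun k q : Fin n => β ^ (max (k.1 + 1) (q.1 + 1))) := by
      ext i j
      simp [Matrix.transpose_apply, max_comm]
    calc (Matrix.of fun k q : Fin n => β ^ (max (k.1 + 1) (q.1 + 1)))⁻¹ k q
        = ((Matrix.of fun k q : Fin n => β ^ (max (k.1 + 1) (q.1 + 1)))ᵀ)⁻¹ k q := by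
          rw [hsymm]
      _ = ((Matrix.of fun k q : Fin n => β ^ (max (k.1 + 1) (q.1 + 1)))⁻¹)ᵀ k q := by
          rw [Matrix.transpose_nonsing_inv]
      _ = (Matrix.of fun k q : Fin n => β ^ (max (k.1 + 1) (q.1 + 1)))⁻¹ q k := rfl
      _ = 0 := tc_inv_zero_of_lt β hβ0 hβ1 q k h
end

section
/- Let f(θ) = (1/2)‖w − Aθ‖² + δ·√(θᵀ K⁻¹ θ) with δ > 0 and K positive definite, for θ ∈ ℝ^n. Then θ = 0 is a minimizer of f if and only if ‖K^{1/2} Aᵀ w‖₂ ≤ δ. -/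
/-- The positive semidefinite square root of a positive semidefinite matrix, as defined in
the older Mathlib (removed since). -/
noncomputable def Matrix.PosSemidef.sqrt {n 𝕜 : Type*} [Fintype n] [DecidableEq n] [RCLike 𝕜] [PartialOrder 𝕜]
    {A : Matrix n n 𝕜} (hA : A.PosSemidef) : Matrix n n 𝕜 :=
  (hA.1.eigenvectorUnitary : Matrix n n 𝕜) * Matrix.diagonal ((RCLike.ofReal : ℝ → 𝕜) ∘ Real.sqrt ∘ hA.1.eigenvalues) *
    (star hA.1.eigenvectorUnitary : Matrix n n 𝕜)

open Matrix

lemma stmt18_aux_dp {m n : ℕ} (M : Matrix (Fin m) (Fin n) ℝ) (x : Fin n → ℝ) (y : Fin m → ℝ) :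
    (M *ᵥ x) ⬝ᵥ y = x ⬝ᵥ (Mᵀ *ᵥ y) := by
  rw [dotProduct_mulVec, vecMul_transpose]

lemma stmt18_aux_nonneg {n : ℕ} (x : Fin n → ℝ) : 0 ≤ x ⬝ᵥ x :=
  Finset.sum_nonneg fun i _ => mul_self_nonneg _

/-- Zero-characterization for the kernel-based group Lasso (single group): with
`f θ = (1/2)‖w - Aθ‖² + δ √(θᵀK⁻¹θ)`, `δ > 0`, `K` positive definite,
`θ = 0` minimizes `f` iff `‖K^{1/2} Aᵀ w‖₂ ≤ δ`. -/
theorem stmt18 {N n : ℕ} (A : Matrix (Fin N) (Fin n) ℝ) (w : Fin N → ℝ)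
    (δ : ℝ) (hδ : 0 < δ) (K : Matrix (Fin n) (Fin n) ℝ) (hK : K.PosDef)
    (f : (Fin n → ℝ) → ℝ)
    (hf : ∀ θ, f θ = (1/2) * dotProduct (w - A.mulVec θ) (w - A.mulVec θ)
        + δ * Real.sqrt (dotProduct θ (K⁻¹.mulVec θ))) :
    (∀ θ, f 0 ≤ f θ) ↔
      Real.sqrt (dotProduct (hK.posSemidef.sqrt.mulVec (A.transpose.mulVec w))
        (hK.posSemidef.sqrt.mulVec (A.transpose.mulVec w))) ≤ δ := by
  classical
  set S := hK.posSemidef.sqrt with hSdef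
  set g := Aᵀ *ᵥ w with hgdef
  set v := S *ᵥ g with hvdef
  have hSherm : Sᵀ = S := by
    rw [← conjTranspose_eq_transpose_of_trivial]
    simp only [hSdef, Matrix.PosSemidef.sqrt, conjTranspose_mul, diagonal_conjTranspose,
      Matrix.star_eq_conjTranspose, conjTranspose_conjTranspose, Matrix.mul_assoc]
    congr 2
  have hSS : S * S = K := by
    have hU := Unitary.coe_star_mul_self hK.posSemidef.1.eigenvectorUnitary
    conv_rhs => rw [hK.posSemidef.1.spectral_theorem, Unitary.conjStarAlgAut_apply]
    simp only [hSdef, Matrix.PosSemidef.sqrt, Matrix.mul_assoc]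
    rw [← Matrix.mul_assoc (star _ : Matrix _ _ ℝ) _ _, hU, Matrix.one_mul, ← Matrix.mul_assoc (diagonal _),
      diagonal_mul_diagonal]
    congr 2
    ext i j
    simp [diagonal_apply, Real.mul_self_sqrt (hK.posSemidef.eigenvalues_nonneg i)]
  have hSdetu : IsUnit S.det := by
    have h : S.det * S.det = K.det := by rw [← det_mul, hSS]
    have hne : S.det ≠ 0 := by
      intro h0
      rw [h0, mul_zero] at h
      exact hK.det_pos.ne' h.symm
    exact hne.isUnit
  have hSinv : S * S⁻¹ = 1 := mul_nonsing_inv S hSdetu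
  have hSinv' : S⁻¹ * S = 1 := nonsing_inv_mul S hSdetu
  have hid : S * (K⁻¹ * S) = 1 := by
    rw [← hSS, Matrix.mul_inv_rev]
    simp only [Matrix.mul_assoc, hSinv']
    rw [Matrix.mul_one, hSinv]
  -- quadratic form identity
  have hquad : ∀ ψ : Fin n → ℝ, (S *ᵥ ψ) ⬝ᵥ (K⁻¹ *ᵥ (S *ᵥ ψ)) = ψ ⬝ᵥ ψ := by
    intro ψ
    rw [mulVec_mulVec, stmt18_aux_dp, hSherm, mulVec_mulVec, hid, one_mulVec]
  -- linear term identity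
  have hlin : ∀ ψ : Fin n → ℝ, g ⬝ᵥ (S *ᵥ ψ) = v ⬝ᵥ ψ := by
    intro ψ
    rw [dotProduct_comm, stmt18_aux_dp, hSherm, dotProduct_comm, hvdef]
  -- rewrite minimality condition
  have hcond : (∀ θ, f 0 ≤ f θ) ↔
      ∀ θ, g ⬝ᵥ θ ≤ (1/2) * ((A *ᵥ θ) ⬝ᵥ (A *ᵥ θ)) + δ * Real.sqrt (θ ⬝ᵥ (K⁻¹ *ᵥ θ)) := by
    have hf0 : f 0 = (1/2) * (w ⬝ᵥ w) := by
      rw [hf]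
      simp [Matrix.mulVec_zero, Real.sqrt_zero]
    apply forall_congr'
    intro θ
    have h1 : w ⬝ᵥ (A *ᵥ θ) = g ⬝ᵥ θ := by
      rw [dotProduct_mulVec, hgdef, mulVec_transpose]
    have h2 : (A *ᵥ θ) ⬝ᵥ w = g ⬝ᵥ θ := by rw [dotProduct_comm]; exact h1
    have hexp : (w - A *ᵥ θ) ⬝ᵥ (w - A *ᵥ θ)
        = w ⬝ᵥ w - 2 * (g ⬝ᵥ θ) + (A *ᵥ θ) ⬝ᵥ (A *ᵥ θ) := by
      rw [dotProduct_sub, sub_dotProduct, sub_dotProduct, h1, h2]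
      ring
    rw [hf0, hf, hexp]
    constructor <;> intro h <;> linarith
  rw [hcond]
  -- substitute θ = S ψ
  have hsub : (∀ θ, g ⬝ᵥ θ ≤ (1/2) * ((A *ᵥ θ) ⬝ᵥ (A *ᵥ θ)) + δ * Real.sqrt (θ ⬝ᵥ (K⁻¹ *ᵥ θ)))
      ↔ ∀ ψ, v ⬝ᵥ ψ ≤ (1/2) * ((A *ᵥ (S *ᵥ ψ)) ⬝ᵥ (A *ᵥ (S *ᵥ ψ))) + δ * Real.sqrt (ψ ⬝ᵥ ψ) := by
    constructor
    · intro h ψ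
      have := h (S *ᵥ ψ)
      rwa [hlin, hquad] at this
    · intro h θ
      have hθ : S *ᵥ (S⁻¹ *ᵥ θ) = θ := by
        rw [mulVec_mulVec, hSinv, one_mulVec]
      have l1 := hlin (S⁻¹ *ᵥ θ)
      have l2 := hquad (S⁻¹ *ᵥ θ)
      rw [hθ] at l1 l2
      have := h (S⁻¹ *ᵥ θ)
      rw [hθ] at this
      rw [l1, l2]
      exact this
  rw [hsub]
  constructor
  · -- forward: test with ψ = t • v
    intro h
    have hvv : 0 ≤ v ⬝ᵥ v := stmt18_aux_nonneg v
    set s := Real.sqrt (v ⬝ᵥ v) with hs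
    have hsnn : 0 ≤ s := Real.sqrt_nonneg _
    have hss : s * s = v ⬝ᵥ v := Real.mul_self_sqrt hvv
    have key : v ⬝ᵥ v ≤ δ * s := by
      refine le_of_forall_pos_le_add ?_
      intro ε hε
      set q := (A *ᵥ (S *ᵥ v)) ⬝ᵥ (A *ᵥ (S *ᵥ v)) with hq
      have hqnn : 0 ≤ q := stmt18_aux_nonneg _
      set t := 2 * ε / (q + 1) with ht
      have hqpos : 0 < q + 1 := by linarith
      have htpos : 0 < t := by positivity
      have happ := h (t • v)
      have e1 : v ⬝ᵥ (t • v) = t * (v ⬝ᵥ v) := by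
        rw [dotProduct_smul]; simp [smul_eq_mul]
      have e2 : A *ᵥ (S *ᵥ (t • v)) = t • (A *ᵥ (S *ᵥ v)) := by
        rw [mulVec_smul, mulVec_smul]
      have e3 : (t • (A *ᵥ (S *ᵥ v))) ⬝ᵥ (t • (A *ᵥ (S *ᵥ v))) = t * t * q := by
        rw [smul_dotProduct, dotProduct_smul, smul_eq_mul, smul_eq_mul]; ring
      have e4 : Real.sqrt ((t • v) ⬝ᵥ (t • v)) = t * s := by
        rw [smul_dotProduct, dotProduct_smul]
        simp only [smul_eq_mul]
        rw [show t * (t * (v ⬝ᵥ v)) = (t * t) * (v ⬝ᵥ v) by ring,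
          Real.sqrt_mul (mul_self_nonneg t), Real.sqrt_mul_self htpos.le, hs]
      rw [e1, e2, e3, e4] at happ
      have happ' : v ⬝ᵥ v ≤ (1/2) * (t * q) + δ * s := by
        have := mul_le_mul_of_nonneg_left happ (le_of_lt (inv_pos.mpr htpos))
        rw [mul_add] at this
        calc v ⬝ᵥ v = t⁻¹ * (t * (v ⬝ᵥ v)) := by field_simp
          _ ≤ t⁻¹ * ((1/2) * (t * t * q)) + t⁻¹ * (δ * (t * s)) := this
          _ = (1/2) * (t * q) + δ * s := by field_simp
      have htq : (1/2) * (t * q) ≤ ε := by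
        have htq' : t * q ≤ 2 * ε := by
          rw [ht, div_mul_eq_mul_div, div_le_iff₀ hqpos]
          nlinarith
        linarith
      linarith
    rcases eq_or_lt_of_le hsnn with h0 | hpos
    · rw [← h0]; exact hδ.le
    · have h2 : s * s ≤ δ * s := by rw [hss]; exact key
      exact le_of_mul_le_mul_right h2 hpos
  · -- backward: Cauchy–Schwarz
    intro h ψ
    have hCS : (v ⬝ᵥ ψ) ^ 2 ≤ (v ⬝ᵥ v) * (ψ ⬝ᵥ ψ) := by
      have := Finset.sum_mul_sq_le_sq_mul_sq Finset.univ v ψ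
      simpa [dotProduct, sq, Finset.mul_sum] using this
    have h1 : v ⬝ᵥ ψ ≤ Real.sqrt (v ⬝ᵥ v) * Real.sqrt (ψ ⬝ᵥ ψ) := by
      have := Real.sqrt_le_sqrt hCS
      rw [Real.sqrt_sq_eq_abs, Real.sqrt_mul (stmt18_aux_nonneg v)] at this
      exact le_trans (le_abs_self _) this
    have h2 : Real.sqrt (v ⬝ᵥ v) * Real.sqrt (ψ ⬝ᵥ ψ) ≤ δ * Real.sqrt (ψ ⬝ᵥ ψ) :=
      mul_le_mul_of_nonneg_right h (Real.sqrt_nonneg _)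
    have h3 : 0 ≤ (1/2) * ((A *ᵥ (S *ᵥ ψ)) ⬝ᵥ (A *ᵥ (S *ᵥ ψ))) := by
      have := stmt18_aux_nonneg (A *ᵥ (S *ᵥ ψ))
      linarith
    linarith
end
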